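/- Let G be a (P6, diamond)-free graph containing an induced 5-cycle v1v2v3v4v5, with B_{i,i+1} the set of vertices outside the cycle adjacent on the cycle exactly to v_i and v_{i+1}. Then for each i, at least one of B_{i,i+1} and B_{i-1,i} is empty. -/

import Mathlib

open SimpleGraph

def diamond : SimpleGraph (Fin 4) := (⊤ : SimpleGraph (Fin 4)).deleteEdges {s(0, 1)}

private lemma fin5_add_cancel : ∀ (i x y : Fin 5), i + x = i + y ↔ x = y := by decide

private lemma my_cons_val_five {α : Type*} (a₀ a₁ a₂ a₃ a₄ a₅ : α) :
    ![a₀, a₁, a₂, a₃, a₄, a₅] 5 = a₅ := rfl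

private lemma diamond_adj (x y : Fin 4) :
    diamond.Adj x y ↔ x ≠ y ∧ ¬ s(x, y) = s(0, 1) := by
  simp only [diamond, deleteEdges_adj, top_adj, Set.mem_singleton_iff]

set_option maxHeartbeats 2000000 in
theorem stmt_5 {V : Type*} (G : SimpleGraph V)
    (hP6 : ¬ Nonempty (pathGraph 6 ↪g G))
    (hD : ¬ Nonempty (diamond ↪g G))
    (v : Fin 5 → V) (hv : Function.Injective v)
    (hC5 : ∀ i j, G.Adj (v i) (v j) ↔ j = i + 1 ∨ i = j + 1)
    (B : Fin 5 → Set V)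
    (hB : ∀ i, B i = {u | u ∉ Set.range v ∧ ∀ j, G.Adj u (v j) ↔ (j = i ∨ j = i + 1)}) :
    ∀ i, B i = ∅ ∨ B (i - 1) = ∅ := by
  intro i
  by_contra h
  push_neg at h
  obtain ⟨h1, h2⟩ := h
  obtain ⟨a, ha⟩ := h1
  obtain ⟨b, hb⟩ := h2
  rw [hB] at ha hb
  obtain ⟨hav, haj⟩ := ha
  obtain ⟨hbv, hbj⟩ := hb
  have him : i - 1 = i + 4 := by
    have : ∀ j : Fin 5, j - 1 = j + 4 := by decide
    exact this i
  rw [him] at hbj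
  have e41 : ∀ j : Fin 5, j + 4 + 1 = j + 0 := by decide
  -- adjacency of a to cycle vertices
  have haT : ∀ x : Fin 5, G.Adj a (v (i + x)) ↔ (x = 0 ∨ x = 1) := by
    intro x
    rw [haj (i + x)]
    constructor
    · rintro (h | h)
      · left; exact (fin5_add_cancel i x 0).mp (by simpa using h)
      · right; exact (fin5_add_cancel i x 1).mp h
    · rintro (rfl | rfl) <;> simp
  have hbT : ∀ x : Fin 5, G.Adj b (v (i + x)) ↔ (x = 4 ∨ x = 0) := by
    intro x
    rw [hbj (i + x)]
    constructor
    · rintro (h | h)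
      · left; exact (fin5_add_cancel i x 4).mp h
      · right
        rw [e41 i] at h
        exact (fin5_add_cancel i x 0).mp h
    · rintro (rfl | rfl)
      · left; rfl
      · right; rw [e41 i]
  -- adjacency within the cycle, shifted
  have hCT : ∀ x y : Fin 5, G.Adj (v (i + x)) (v (i + y)) ↔ (y = x + 1 ∨ x = y + 1) := by
    intro x y
    rw [hC5 (i + x) (i + y)]
    constructor
    · rintro (h | h)
      · left; exact (fin5_add_cancel i y (x + 1)).mp (by rw [h, add_assoc])
      · right; exact (fin5_add_cancel i x (y + 1)).mp (by rw [h, add_assoc])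
    · rintro (rfl | rfl)
      · left; rw [add_assoc]
      · right; rw [add_assoc]
  have hane : ∀ x : Fin 5, a ≠ v (i + x) := fun x h => hav ⟨i + x, h.symm⟩
  have hbne : ∀ x : Fin 5, b ≠ v (i + x) := fun x h => hbv ⟨i + x, h.symm⟩
  have hvne : ∀ x y : Fin 5, x ≠ y → v (i + x) ≠ v (i + y) := by
    intro x y hxy h
    exact hxy ((fin5_add_cancel i x y).mp (hv h))
  have hab : a ≠ b := by
    intro h
    have h4 : G.Adj b (v (i + 4)) := (hbT 4).mpr (Or.inl rfl)
    rw [← h] at h4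
    have := (haT 4).mp h4
    simp at this
  -- named adjacency facts
  have hb4 : G.Adj b (v (i + 4)) := (hbT 4).mpr (Or.inl rfl)
  have hb0 : G.Adj b (v (i + 0)) := (hbT 0).mpr (Or.inr rfl)
  have ha0 : G.Adj a (v (i + 0)) := (haT 0).mpr (Or.inl rfl)
  have ha1 : G.Adj a (v (i + 1)) := (haT 1).mpr (Or.inr rfl)
  have nb3 : ¬ G.Adj b (v (i + 3)) := fun h => by have := (hbT 3).mp h; simp at this
  have nb2 : ¬ G.Adj b (v (i + 2)) := fun h => by have := (hbT 2).mp h; simp at this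
  have nb1 : ¬ G.Adj b (v (i + 1)) := fun h => by have := (hbT 1).mp h; simp at this
  have na4 : ¬ G.Adj a (v (i + 4)) := fun h => by have := (haT 4).mp h; simp at this
  have na3 : ¬ G.Adj a (v (i + 3)) := fun h => by have := (haT 3).mp h; simp at this
  have na2 : ¬ G.Adj a (v (i + 2)) := fun h => by have := (haT 2).mp h; simp at this
  have hc01 : G.Adj (v (i + 0)) (v (i + 1)) := (hCT 0 1).mpr (Or.inl rfl)
  have hc43 : G.Adj (v (i + 4)) (v (i + 3)) := (hCT 4 3).mpr (Or.inr (by decide))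
  have hc32 : G.Adj (v (i + 3)) (v (i + 2)) := (hCT 3 2).mpr (Or.inr (by decide))
  have hc21 : G.Adj (v (i + 2)) (v (i + 1)) := (hCT 2 1).mpr (Or.inr (by decide))
  have nc42 : ¬ G.Adj (v (i + 4)) (v (i + 2)) := fun h => by
    have := (hCT 4 2).mp h; revert this; decide
  have nc41 : ¬ G.Adj (v (i + 4)) (v (i + 1)) := fun h => by
    have := (hCT 4 1).mp h; revert this; decide
  have nc31 : ¬ G.Adj (v (i + 3)) (v (i + 1)) := fun h => by
    have := (hCT 3 1).mp h; revert this; decide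
  by_cases hadj : G.Adj a b
  · -- diamond on b, v(i+1), a, v(i+0)
    apply hD
    refine ⟨⟨⟨![b, v (i + 1), a, v (i + 0)], ?_⟩, ?_⟩⟩
    · intro x y hxy
      fin_cases x <;> fin_cases y <;>
        simp only [Matrix.cons_val_zero, Matrix.cons_val_one, Matrix.head_cons,
          Matrix.cons_val_two, Matrix.tail_cons, Matrix.cons_val_three] at hxy ⊢ <;>
        first
          | rfl
          | exact absurd hxy (hbne 1)
          | exact absurd hxy (Ne.symm (hbne 1))
          | exact absurd hxy (hbne 0)
          | exact absurd hxy (Ne.symm (hbne 0))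
          | exact absurd hxy (hane 1)
          | exact absurd hxy (Ne.symm (hane 1))
          | exact absurd hxy (hane 0)
          | exact absurd hxy (Ne.symm (hane 0))
          | exact absurd hxy hab
          | exact absurd hxy (Ne.symm hab)
          | exact absurd hxy (hvne 1 0 (by decide))
          | exact absurd hxy (hvne 0 1 (by decide))
    · intro x y
      fin_cases x <;> fin_cases y <;>
        simp only [Function.Embedding.coeFn_mk, Matrix.cons_val_zero, Matrix.cons_val_one,
          Matrix.head_cons, Matrix.cons_val_two, Matrix.tail_cons, Matrix.cons_val_three] <;>
        rw [diamond_adj] <;>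
        first
          | exact iff_of_false G.irrefl (by decide)
          | exact iff_of_false nb1 (by decide)
          | exact iff_of_false (fun h => nb1 h.symm) (by decide)
          | exact iff_of_true hadj.symm (by decide)
          | exact iff_of_true hadj (by decide)
          | exact iff_of_true hb0 (by decide)
          | exact iff_of_true hb0.symm (by decide)
          | exact iff_of_true ha1 (by decide)
          | exact iff_of_true ha1.symm (by decide)
          | exact iff_of_true ha0 (by decide)
          | exact iff_of_true ha0.symm (by decide)
          | exact iff_of_true hc01 (by decide)
          | exact iff_of_true hc01.symm (by decide)
  · -- induced P6 : b, v(i+4), v(i+3), v(i+2), v(i+1), a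
    apply hP6
    refine ⟨⟨⟨![b, v (i + 4), v (i + 3), v (i + 2), v (i + 1), a], ?_⟩, ?_⟩⟩
    · intro x y hxy
      fin_cases x <;> fin_cases y <;>
        simp only [Matrix.cons_val_zero, Matrix.cons_val_one, Matrix.head_cons,
          Matrix.cons_val_two, Matrix.tail_cons, Matrix.cons_val_three,
          Matrix.cons_val_four, my_cons_val_five] at hxy ⊢ <;>
        first
          | rfl
          | exact absurd hxy hab
          | exact absurd hxy (Ne.symm hab)
          | exact absurd hxy (hbne 4)
          | exact absurd hxy (Ne.symm (hbne 4))
          | exact absurd hxy (hbne 3)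
          | exact absurd hxy (Ne.symm (hbne 3))
          | exact absurd hxy (hbne 2)
          | exact absurd hxy (Ne.symm (hbne 2))
          | exact absurd hxy (hbne 1)
          | exact absurd hxy (Ne.symm (hbne 1))
          | exact absurd hxy (hane 4)
          | exact absurd hxy (Ne.symm (hane 4))
          | exact absurd hxy (hane 3)
          | exact absurd hxy (Ne.symm (hane 3))
          | exact absurd hxy (hane 2)
          | exact absurd hxy (Ne.symm (hane 2))
          | exact absurd hxy (hane 1)
          | exact absurd hxy (Ne.symm (hane 1))
          | exact absurd hxy (hvne 4 3 (by decide))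
          | exact absurd hxy (hvne 3 4 (by decide))
          | exact absurd hxy (hvne 4 2 (by decide))
          | exact absurd hxy (hvne 2 4 (by decide))
          | exact absurd hxy (hvne 4 1 (by decide))
          | exact absurd hxy (hvne 1 4 (by decide))
          | exact absurd hxy (hvne 3 2 (by decide))
          | exact absurd hxy (hvne 2 3 (by decide))
          | exact absurd hxy (hvne 3 1 (by decide))
          | exact absurd hxy (hvne 1 3 (by decide))
          | exact absurd hxy (hvne 2 1 (by decide))
          | exact absurd hxy (hvne 1 2 (by decide))
    · intro x y
      fin_cases x <;> fin_cases y <;>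
        simp only [Function.Embedding.coeFn_mk, Matrix.cons_val_zero, Matrix.cons_val_one,
          Matrix.head_cons, Matrix.cons_val_two, Matrix.tail_cons, Matrix.cons_val_three,
          Matrix.cons_val_four, my_cons_val_five] <;>
        rw [pathGraph_adj] <;>
        first
          | exact iff_of_false G.irrefl (by decide)
          | exact iff_of_true hb4 (by decide)
          | exact iff_of_true hb4.symm (by decide)
          | exact iff_of_true hc43 (by decide)
          | exact iff_of_true hc43.symm (by decide)
          | exact iff_of_true hc32 (by decide)
          | exact iff_of_true hc32.symm (by decide)
          | exact iff_of_true hc21 (by decide)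
          | exact iff_of_true hc21.symm (by decide)
          | exact iff_of_true ha1.symm (by decide)
          | exact iff_of_true ha1 (by decide)
          | exact iff_of_false hadj (by decide)
          | exact iff_of_false (fun h => hadj h.symm) (by decide)
          | exact iff_of_false nb3 (by decide)
          | exact iff_of_false (fun h => nb3 h.symm) (by decide)
          | exact iff_of_false nb2 (by decide)
          | exact iff_of_false (fun h => nb2 h.symm) (by decide)
          | exact iff_of_false nb1 (by decide)
          | exact iff_of_false (fun h => nb1 h.symm) (by decide)
          | exact iff_of_false na4 (by decide)
          | exact iff_of_false (fun h => na4 h.symm) (by decide)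
          | exact iff_of_false na3 (by decide)
          | exact iff_of_false (fun h => na3 h.symm) (by decide)
          | exact iff_of_false na2 (by decide)
          | exact iff_of_false (fun h => na2 h.symm) (by decide)
          | exact iff_of_false nc42 (by decide)
          | exact iff_of_false (fun h => nc42 h.symm) (by decide)
          | exact iff_of_false nc41 (by decide)
          | exact iff_of_false (fun h => nc41 h.symm) (by decide)
          | exact iff_of_false nc31 (by decide)
          | exact iff_of_false (fun h => nc31 h.symm) (by decide)
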